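/- (Outlier corollary) In the setting of the main theorem with S = {x̂} a single point (ρ = 1/n), lim_{c→∞} CKA_lin(X, Y_c) = (1/(n−1)) · ‖x̂‖² / ((1/n)Σᵢ‖xᵢ‖²) · √PR(X). In particular the limit is at most (n/(n−1)) · √p · ‖x̂‖² / Σᵢ‖xᵢ‖², which tends to 0 as n → ∞ if ‖x̂‖²/average squared norm and PR(X) stay bounded. -/

import Mathlib

open Finset Matrix

lemma trace_eq_sum_eig {m : ℕ} {A : Matrix (Fin m) (Fin m) ℝ} (hA : A.IsHermitian) :
    A.trace = ∑ j, hA.eigenvalues j := by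
  conv_lhs => rw [hA.spectral_theorem, Unitary.conjStarAlgAut_apply]
  rw [Matrix.trace_mul_cycle, Unitary.coe_star_mul_self, Matrix.one_mul]
  simp [Matrix.trace_diagonal]

lemma trace_sq_eq_sum_eig_sq {m : ℕ} {A : Matrix (Fin m) (Fin m) ℝ} (hA : A.IsHermitian) :
    (A * A).trace = ∑ j, hA.eigenvalues j ^ 2 := by
  have hU : star (hA.eigenvectorUnitary : Matrix (Fin m) (Fin m) ℝ) *
      (hA.eigenvectorUnitary : Matrix (Fin m) (Fin m) ℝ) = 1 := Unitary.coe_star_mul_self _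
  have h1 : ∀ X : Matrix (Fin m) (Fin m) ℝ,
      star (hA.eigenvectorUnitary : Matrix (Fin m) (Fin m) ℝ) *
        ((hA.eigenvectorUnitary : Matrix (Fin m) (Fin m) ℝ) * X) = X := fun X => by
    rw [← Matrix.mul_assoc, hU, Matrix.one_mul]
  conv_lhs => rw [hA.spectral_theorem, Unitary.conjStarAlgAut_apply]
  simp only [Matrix.mul_assoc, h1]
  rw [Matrix.trace_mul_comm]
  simp only [Matrix.mul_assoc, hU, Matrix.mul_one]
  rw [Matrix.diagonal_mul_diagonal]
  simp [Matrix.trace_diagonal, sq]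

theorem cka_outlier_limit (n p : ℕ) (hn : 2 ≤ n)
    (x : Fin n → EuclideanSpace ℝ (Fin p)) (hcent : ∑ i, x i = 0)
    (hX : ∃ i, x i ≠ 0)
    (i₀ : Fin n)
    (v : EuclideanSpace ℝ (Fin p)) (hv : ‖v‖ = 1)
    (y : ℝ → Fin n → EuclideanSpace ℝ (Fin p))
    (hy : ∀ c i, y c i = if i = i₀ then x i - ((c * ((n : ℝ) - 1)) / n) • v
        else x i + (c / n) • v)
    (A : Matrix (Fin p) (Fin p) ℝ)
    (hAdef : ∀ j k, A j k = (n : ℝ)⁻¹ * ∑ i, x i j * x i k)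
    (hA : A.IsHermitian)
    (hdenX : ∑ i, ∑ j, (inner ℝ (x i) (x j) : ℝ) ^ 2 ≠ 0)
    (hdenY : ∀ᶠ c in Filter.atTop, ∑ i, ∑ j, (inner ℝ (y c i) (y c j) : ℝ) ^ 2 ≠ 0) :
    Filter.Tendsto
      (fun c : ℝ =>
        (∑ i, ∑ j, (inner ℝ (x i) (x j) : ℝ) * (inner ℝ (y c i) (y c j) : ℝ)) /
          Real.sqrt ((∑ i, ∑ j, (inner ℝ (x i) (x j) : ℝ) ^ 2) *
            (∑ i, ∑ j, (inner ℝ (y c i) (y c j) : ℝ) ^ 2)))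
      Filter.atTop
      (nhds (((n : ℝ) - 1)⁻¹ * ‖x i₀‖ ^ 2 / ((n : ℝ)⁻¹ * ∑ i, ‖x i‖ ^ 2) *
        Real.sqrt ((∑ j, hA.eigenvalues j) ^ 2 / (∑ j, (hA.eigenvalues j) ^ 2)))) ∧
    ((n : ℝ) - 1)⁻¹ * ‖x i₀‖ ^ 2 / ((n : ℝ)⁻¹ * ∑ i, ‖x i‖ ^ 2) *
        Real.sqrt ((∑ j, hA.eigenvalues j) ^ 2 / (∑ j, (hA.eigenvalues j) ^ 2))
      ≤ ((n : ℝ) / ((n : ℝ) - 1)) * Real.sqrt p * ‖x i₀‖ ^ 2 / ∑ i, ‖x i‖ ^ 2 := by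
  have hn2 : (2:ℝ) ≤ (n:ℝ) := by exact_mod_cast hn
  have hnpos : (0:ℝ) < n := by linarith
  have hn0 : (n:ℝ) ≠ 0 := ne_of_gt hnpos
  have hn1 : (0:ℝ) < (n:ℝ) - 1 := by linarith
  have hn1' : (n:ℝ) - 1 ≠ 0 := ne_of_gt hn1
  -- basic notations
  set q : Fin n → Fin n → ℝ := fun i j => (inner ℝ (x i) (x j) : ℝ) with hqdef
  set a : Fin n → ℝ := fun i => (n:ℝ)⁻¹ - (if i = i₀ then 1 else 0) with hadef
  -- y in uniform form
  have hyc : ∀ c i, y c i = x i + (c * a i) • v := by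
    intro c i
    rw [hy c i]
    by_cases h : i = i₀
    · simp only [h, if_pos rfl, hadef, ↓reduceIte]
      rw [sub_eq_add_neg, ← neg_smul]
      congr 1
      field_simp
      ring
    · simp only [if_neg h, hadef, h, if_false]
      congr 1
      field_simp
      simp
  -- inner products of the y's
  have hinner : ∀ c i j, (inner ℝ (y c i) (y c j) : ℝ) =
      q i j + c * (a j * (inner ℝ (x i) v : ℝ) + a i * (inner ℝ (x j) v : ℝ))
        + c^2 * (a i * a j) := by
    intro c i j
    rw [hyc c i, hyc c j]
    simp only [inner_add_left, inner_add_right, real_inner_smul_left, real_inner_smul_right,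
      real_inner_self_eq_norm_sq, hv, hqdef]
    rw [real_inner_comm v (x j)]
    ring
  -- pointwise limits
  have hglim : ∀ i j, Filter.Tendsto (fun c : ℝ => (inner ℝ (y c i) (y c j) : ℝ) / c^2)
      Filter.atTop (nhds (a i * a j)) := by
    intro i j
    have h0 : Filter.Tendsto (fun c : ℝ =>
        q i j / c^2 + (a j * (inner ℝ (x i) v : ℝ) + a i * (inner ℝ (x j) v : ℝ)) / c + a i * a j)
        Filter.atTop (nhds (0 + 0 + a i * a j)) := by
      refine Filter.Tendsto.add (Filter.Tendsto.add ?_ ?_) tendsto_const_nhds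
      · exact tendsto_const_nhds.div_atTop (Filter.tendsto_pow_atTop two_ne_zero)
      · exact tendsto_const_nhds.div_atTop Filter.tendsto_id
    rw [zero_add, zero_add] at h0
    refine h0.congr' ?_
    filter_upwards [Filter.eventually_gt_atTop 0] with c hc
    rw [hinner c i j]
    have hc2 : c ≠ 0 := ne_of_gt hc
    field_simp
  -- sum identities
  have hax : ∑ i, a i • x i = - x i₀ := by
    have : ∀ i, a i • x i = (n:ℝ)⁻¹ • x i - (if i = i₀ then x i else 0) := by
      intro i
      by_cases h : i = i₀ <;> simp [hadef, h, sub_smul]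
    rw [Finset.sum_congr rfl fun i _ => this i, Finset.sum_sub_distrib, ← Finset.smul_sum,
      hcent, smul_zero, Finset.sum_ite_eq' Finset.univ i₀ (fun i => x i)]
    simp
  have hN2 : ∑ i, ∑ j, q i j * (a i * a j) = ‖x i₀‖^2 := by
    have h1 : (inner ℝ (∑ i, a i • x i) (∑ j, a j • x j) : ℝ)
        = ∑ i, ∑ j, q i j * (a i * a j) := by
      rw [sum_inner]
      refine Finset.sum_congr rfl fun i _ => ?_
      rw [inner_sum]
      simp only [real_inner_smul_left, real_inner_smul_right, hqdef]
      refine Finset.sum_congr rfl fun j _ => by ring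
    rw [← h1, hax, inner_neg_neg, real_inner_self_eq_norm_sq]
  have hasq : ∑ i, a i ^ 2 = ((n:ℝ) - 1)/n := by
    have : ∀ i, a i ^ 2 = ((n:ℝ)⁻¹)^2 + (if i = i₀ then 1 - 2*(n:ℝ)⁻¹ else 0) := by
      intro i
      by_cases h : i = i₀ <;> simp [hadef, h] <;> ring
    rw [Finset.sum_congr rfl fun i _ => this i, Finset.sum_add_distrib,
      Finset.sum_ite_eq' Finset.univ i₀ (fun _ => 1 - 2*(n:ℝ)⁻¹)]
    simp only [Finset.sum_const, Finset.card_univ, Fintype.card_fin, nsmul_eq_mul,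
      Finset.mem_univ, if_pos]
    field_simp
    ring
  have hLval : ∑ i, ∑ j, (a i * a j)^2 = (((n:ℝ) - 1)/n)^2 := by
    have : ∑ i, ∑ j, (a i * a j)^2 = (∑ i, a i ^2) * (∑ j, a j ^2) := by
      rw [Finset.sum_mul_sum]
      exact Finset.sum_congr rfl fun i _ => Finset.sum_congr rfl fun j _ => by ring
    rw [this, hasq, sq]
  -- numerator and denominator limits
  have hNum : Filter.Tendsto
      (fun c : ℝ => (∑ i, ∑ j, q i j * (inner ℝ (y c i) (y c j) : ℝ)) / c^2)
      Filter.atTop (nhds (‖x i₀‖^2)) := by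
    rw [← hN2]
    have heq : ∀ c : ℝ, (∑ i, ∑ j, q i j * (inner ℝ (y c i) (y c j) : ℝ)) / c^2
        = ∑ i, ∑ j, q i j * ((inner ℝ (y c i) (y c j) : ℝ) / c^2) := by
      intro c
      rw [Finset.sum_div]
      exact Finset.sum_congr rfl fun i _ => by
        rw [Finset.sum_div]
        exact Finset.sum_congr rfl fun j _ => by rw [mul_div_assoc]
    simp only [heq]
    exact tendsto_finset_sum _ fun i _ => tendsto_finset_sum _ fun j _ =>
      ((hglim i j).const_mul _)
  have hDen : Filter.Tendsto
      (fun c : ℝ => (∑ i, ∑ j, (inner ℝ (y c i) (y c j) : ℝ)^2) / (c^2)^2)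
      Filter.atTop (nhds ((((n:ℝ) - 1)/n)^2)) := by
    rw [← hLval]
    have heq : ∀ c : ℝ, (∑ i, ∑ j, (inner ℝ (y c i) (y c j) : ℝ)^2) / (c^2)^2
        = ∑ i, ∑ j, ((inner ℝ (y c i) (y c j) : ℝ) / c^2)^2 := by
      intro c
      rw [Finset.sum_div]
      exact Finset.sum_congr rfl fun i _ => by
        rw [Finset.sum_div]
        exact Finset.sum_congr rfl fun j _ => by rw [div_pow]
    simp only [heq]
    exact tendsto_finset_sum _ fun i _ => tendsto_finset_sum _ fun j _ => (hglim i j).pow 2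
  -- positivity of denominators
  set denX : ℝ := ∑ i, ∑ j, q i j ^ 2 with hdenXdef
  have hdenXnn : 0 ≤ denX := Finset.sum_nonneg fun i _ => Finset.sum_nonneg fun j _ => sq_nonneg _
  have hdenXpos : 0 < denX := lt_of_le_of_ne hdenXnn (Ne.symm hdenX)
  have hLpos : (0:ℝ) < (((n:ℝ) - 1)/n)^2 := pow_pos (div_pos hn1 hnpos) 2
  have hsqrtpos : 0 < Real.sqrt (denX * (((n:ℝ) - 1)/n)^2) :=
    Real.sqrt_pos.mpr (mul_pos hdenXpos hLpos)
  -- the main limit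
  have hmain : Filter.Tendsto
      (fun c : ℝ =>
        (∑ i, ∑ j, q i j * (inner ℝ (y c i) (y c j) : ℝ)) /
          Real.sqrt (denX * (∑ i, ∑ j, (inner ℝ (y c i) (y c j) : ℝ) ^ 2)))
      Filter.atTop
      (nhds (‖x i₀‖^2 / Real.sqrt (denX * (((n:ℝ) - 1)/n)^2))) := by
    have h1 : Filter.Tendsto
        (fun c : ℝ =>
          ((∑ i, ∑ j, q i j * (inner ℝ (y c i) (y c j) : ℝ)) / c^2) /
            Real.sqrt (denX * ((∑ i, ∑ j, (inner ℝ (y c i) (y c j) : ℝ) ^ 2) / (c^2)^2)))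
        Filter.atTop
        (nhds (‖x i₀‖^2 / Real.sqrt (denX * (((n:ℝ) - 1)/n)^2))) :=
      hNum.div ((tendsto_const_nhds.mul hDen).sqrt) (ne_of_gt hsqrtpos)
    refine h1.congr' ?_
    filter_upwards [Filter.eventually_gt_atTop 0] with c hc
    have hc2 : (0:ℝ) < c^2 := by positivity
    have hDnn : 0 ≤ ∑ i, ∑ j, (inner ℝ (y c i) (y c j) : ℝ) ^ 2 :=
      Finset.sum_nonneg fun i _ => Finset.sum_nonneg fun j _ => sq_nonneg _
    have hrw : denX * ((∑ i, ∑ j, (inner ℝ (y c i) (y c j) : ℝ) ^ 2) / (c^2)^2)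
        = (denX * (∑ i, ∑ j, (inner ℝ (y c i) (y c j) : ℝ) ^ 2)) / (c^2)^2 := by ring
    rw [hrw, Real.sqrt_div (mul_nonneg hdenXnn hDnn) ((c^2)^2), Real.sqrt_sq (le_of_lt hc2),
      div_div_eq_mul_div, div_mul_cancel₀ _ (ne_of_gt hc2)]
  -- norm and inner formulas
  have hnorm : ∀ w : EuclideanSpace ℝ (Fin p), ‖w‖^2 = ∑ j, w j * w j := fun w => by
    rw [EuclideanSpace.norm_sq_eq]
    exact Finset.sum_congr rfl fun j _ => by rw [Real.norm_eq_abs, sq_abs, sq]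
  have hqf : ∀ i i', q i i' = ∑ j, x i j * x i' j := fun i i' => by
    simp [hqdef, PiLp.inner_apply]
    exact Finset.sum_congr rfl fun j _ => mul_comm _ _
  -- trace identities
  have hT : ∑ j, hA.eigenvalues j = (n:ℝ)⁻¹ * ∑ i, ‖x i‖^2 := by
    rw [← trace_eq_sum_eig hA]
    simp only [Matrix.trace, Matrix.diag, hAdef]
    rw [← Finset.mul_sum, Finset.sum_comm]
    congr 1
    exact Finset.sum_congr rfl fun i _ => (hnorm (x i)).symm
  have hS2 : ∑ j, hA.eigenvalues j ^ 2 = denX / (n:ℝ)^2 := by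
    rw [← trace_sq_eq_sum_eig_sq hA]
    set M : Matrix (Fin n) (Fin p) ℝ := Matrix.of fun i j => x i j with hM
    have hAM : A = (n:ℝ)⁻¹ • (Mᵀ * M) := by
      ext j k
      rw [hAdef]
      simp only [Matrix.smul_apply, Matrix.mul_apply, Matrix.transpose_apply, hM,
        Matrix.of_apply, smul_eq_mul]
    have h1 : A * A = (n:ℝ)⁻¹ • ((n:ℝ)⁻¹ • ((Mᵀ * M) * (Mᵀ * M))) := by
      rw [hAM, Matrix.smul_mul, Matrix.mul_smul]
    have h2 : ((Mᵀ * M) * (Mᵀ * M)).trace = ((M * Mᵀ) * (M * Mᵀ)).trace := by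
      rw [show (Mᵀ * M) * (Mᵀ * M) = Mᵀ * M * (Mᵀ * M) from rfl,
        Matrix.trace_mul_cycle (Mᵀ) M (Mᵀ * M),
        Matrix.trace_mul_cycle (Mᵀ * M) (Mᵀ) M]
      congr 1
      simp only [Matrix.mul_assoc]
    have h3 : ((M * Mᵀ) * (M * Mᵀ)).trace = denX := by
      simp only [Matrix.trace, Matrix.diag, Matrix.mul_apply, Matrix.transpose_apply, hM,
        Matrix.of_apply, hdenXdef]
      refine Finset.sum_congr rfl fun i _ => ?_
      refine Finset.sum_congr rfl fun i' _ => ?_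
      rw [hqf i i', sq]
      congr 1
      exact Finset.sum_congr rfl fun j _ => mul_comm _ _
    rw [h1, Matrix.trace_smul, Matrix.trace_smul, h2, h3, smul_eq_mul, smul_eq_mul]
    field_simp
  -- positivity of the sum of squared norms
  have hS : 0 < ∑ i, ‖x i‖^2 := by
    obtain ⟨i, hi⟩ := hX
    refine Finset.sum_pos' (fun j _ => sq_nonneg _) ⟨i, Finset.mem_univ i, ?_⟩
    exact pow_pos (norm_pos_iff.mpr hi) 2
  have hS0 : (∑ i, ‖x i‖^2) ≠ 0 := ne_of_gt hS
  set s : ℝ := Real.sqrt denX with hsdef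
  have hspos : 0 < s := Real.sqrt_pos.mpr hdenXpos
  -- value of the limit
  have hval : ((n : ℝ) - 1)⁻¹ * ‖x i₀‖ ^ 2 / ((n : ℝ)⁻¹ * ∑ i, ‖x i‖ ^ 2) *
        Real.sqrt ((∑ j, hA.eigenvalues j) ^ 2 / (∑ j, (hA.eigenvalues j) ^ 2))
      = ‖x i₀‖^2 / Real.sqrt (denX * (((n:ℝ) - 1)/n)^2) := by
    rw [hT, hS2]
    have h4 : ((n:ℝ)⁻¹ * ∑ i, ‖x i‖^2)^2 / (denX / (n:ℝ)^2)
        = (∑ i, ‖x i‖^2)^2 / denX := by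
      field_simp
    rw [h4, Real.sqrt_div (sq_nonneg _) denX, Real.sqrt_sq (le_of_lt hS), ← hsdef,
      Real.sqrt_mul hdenXnn, Real.sqrt_sq (le_of_lt (div_pos hn1 hnpos)), ← hsdef]
    field_simp
  refine ⟨?_, ?_⟩
  · rw [hval]
    exact hmain
  · have hcs : (∑ j, hA.eigenvalues j)^2 ≤ (p:ℝ) * ∑ j, hA.eigenvalues j ^ 2 := by
      simpa using sq_sum_le_card_mul_sum_sq (s := Finset.univ) (f := hA.eigenvalues)
    have hS2pos : 0 < ∑ j, hA.eigenvalues j ^ 2 := by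
      rw [hS2]
      exact div_pos hdenXpos (by positivity)
    have hsqle : Real.sqrt ((∑ j, hA.eigenvalues j)^2 / (∑ j, hA.eigenvalues j ^ 2))
        ≤ Real.sqrt p := by
      apply Real.sqrt_le_sqrt
      rw [div_le_iff₀ hS2pos]
      linarith [hcs]
    have hA0 : 0 ≤ ((n:ℝ) - 1)⁻¹ * ‖x i₀‖ ^ 2 / ((n:ℝ)⁻¹ * ∑ i, ‖x i‖ ^ 2) :=
      div_nonneg (mul_nonneg (inv_nonneg.mpr (le_of_lt hn1)) (sq_nonneg _))
        (mul_nonneg (inv_nonneg.mpr (le_of_lt hnpos)) (le_of_lt hS))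
    calc ((n : ℝ) - 1)⁻¹ * ‖x i₀‖ ^ 2 / ((n : ℝ)⁻¹ * ∑ i, ‖x i‖ ^ 2) *
          Real.sqrt ((∑ j, hA.eigenvalues j) ^ 2 / (∑ j, (hA.eigenvalues j) ^ 2))
        ≤ ((n:ℝ) - 1)⁻¹ * ‖x i₀‖ ^ 2 / ((n:ℝ)⁻¹ * ∑ i, ‖x i‖ ^ 2) * Real.sqrt p :=
          mul_le_mul_of_nonneg_left hsqle hA0
      _ = ((n : ℝ) / ((n : ℝ) - 1)) * Real.sqrt p * ‖x i₀‖ ^ 2 / ∑ i, ‖x i‖ ^ 2 := by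
          field_simp
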